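/- (Theorem 8, sharpness for convex domains.) Let Q ⊆ ℂⁿ be a convex complete circular domain centered at 0 (open, containing 0, with z ∈ Q and |t| ≤ 1 implying tz ∈ Q, and Q convex), Q ≠ ℂⁿ. Then for every r with 1/3 < r < 1 there exist homogeneous polynomials P_k of degree k (k = 0,1,2,…) such that the series f(z) = Σ_{k=0}^∞ P_k(z) converges pointwise on Q with |f(z)| < 1 for all z ∈ Q, and a point z₀ ∈ r·Q with Σ_{k=0}^∞ |P_k(z₀)| ≥ 1. -/

import Mathlib

noncomputable def bohrSeq (a : ℝ) (w : ℂ) : ℕ → ℂ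
  | 0 => (a : ℂ)
  | (k+1) => (-(1 - (a:ℂ)^2) * (a:ℂ)^k) * w^(k+1)

lemma bohrSeq_succ (a : ℝ) (w : ℂ) (k : ℕ) :
    bohrSeq a w (k+1) = (-(1 - (a:ℂ)^2) * w) * ((a:ℂ)*w)^k := by
  show (-(1 - (a:ℂ)^2) * (a:ℂ)^k) * w^(k+1) = _
  rw [mul_pow, pow_succ]; ring

lemma summable_bohrSeq (a : ℝ) (w : ℂ) (haw : ‖(a:ℂ)*w‖ < 1) :
    Summable (bohrSeq a w) := by
  rw [← summable_nat_add_iff 1]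
  have : (fun k => bohrSeq a w (k+1)) = fun k => (-(1 - (a:ℂ)^2) * w) * ((a:ℂ)*w)^k := by
    funext k; exact bohrSeq_succ a w k
  rw [this]
  exact (summable_geometric_of_norm_lt_one haw).mul_left _

lemma tsum_bohrSeq (a : ℝ) (w : ℂ) (haw : ‖(a:ℂ)*w‖ < 1) :
    ∑' k, bohrSeq a w k = ((a:ℂ) - w) / (1 - (a:ℂ)*w) := by
  have hne : (1:ℂ) - (a:ℂ)*w ≠ 0 := by
    intro h
    have : (1:ℂ) = (a:ℂ)*w := by linear_combination h
    rw [← this] at haw; simp at haw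
  rw [(summable_bohrSeq a w haw).tsum_eq_zero_add]
  have : (fun k => bohrSeq a w (k+1)) = fun k => (-(1 - (a:ℂ)^2) * w) * ((a:ℂ)*w)^k := by
    funext k; exact bohrSeq_succ a w k
  rw [this, tsum_mul_left, tsum_geometric_of_norm_lt_one haw]
  show (a:ℂ) + _ = _
  field_simp
  ring

lemma norm_bohrSeq_zero (a : ℝ) (ha0 : 0 ≤ a) (w : ℂ) : ‖bohrSeq a w 0‖ = a := by
  show ‖(a:ℂ)‖ = a
  simp [abs_of_nonneg ha0]

lemma norm_bohrSeq_succ (a : ℝ) (ha0 : 0 ≤ a) (ha1 : a ≤ 1) (w : ℂ) (k : ℕ) :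
    ‖bohrSeq a w (k+1)‖ = ((1 - a^2) * ‖w‖) * (a * ‖w‖)^k := by
  rw [bohrSeq_succ, norm_mul, norm_mul, norm_neg, norm_pow, norm_mul]
  have h1 : ‖(1:ℂ) - (a:ℂ)^2‖ = 1 - a^2 := by
    have : (1:ℂ) - (a:ℂ)^2 = ((1 - a^2 : ℝ) : ℂ) := by push_cast; ring
    rw [this, Complex.norm_real, Real.norm_of_nonneg (by nlinarith)]
  have h2 : ‖(a:ℂ)‖ = a := by simp [abs_of_nonneg ha0]
  rw [h1, h2]

lemma tsum_norm_bohrSeq (a : ℝ) (ha0 : 0 < a) (ha1 : a < 1) (w : ℂ) (hw : ‖w‖ < 1) :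
    ∑' k, ‖bohrSeq a w k‖ = a + ((1 - a^2) * ‖w‖) / (1 - a * ‖w‖) := by
  have haw : a * ‖w‖ < 1 := by nlinarith [norm_nonneg w]
  have haw0 : 0 ≤ a * ‖w‖ := mul_nonneg ha0.le (norm_nonneg w)
  have hs : Summable (fun k => ‖bohrSeq a w (k+1)‖) := by
    have : (fun k => ‖bohrSeq a w (k+1)‖) = fun k => ((1 - a^2) * ‖w‖) * (a * ‖w‖)^k := by
      funext k; exact norm_bohrSeq_succ a ha0.le ha1.le w k
    rw [this]
    exact (summable_geometric_of_lt_one haw0 haw).mul_left _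
  have hsum : Summable (fun k => ‖bohrSeq a w k‖) := (summable_nat_add_iff 1).mp hs
  rw [hsum.tsum_eq_zero_add, norm_bohrSeq_zero a ha0.le]
  congr 1
  have : (fun k => ‖bohrSeq a w (k+1)‖) = fun k => ((1 - a^2) * ‖w‖) * (a * ‖w‖)^k := by
    funext k; exact norm_bohrSeq_succ a ha0.le ha1.le w k
  rw [this, tsum_mul_left, tsum_geometric_of_lt_one haw0 haw, div_eq_mul_inv]

lemma summable_norm_bohrSeq (a : ℝ) (ha0 : 0 < a) (ha1 : a < 1) (w : ℂ) (hw : ‖w‖ < 1) :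
    Summable (fun k => ‖bohrSeq a w k‖) := by
  have haw : a * ‖w‖ < 1 := by nlinarith [norm_nonneg w]
  have haw0 : 0 ≤ a * ‖w‖ := mul_nonneg ha0.le (norm_nonneg w)
  apply (summable_nat_add_iff 1).mp
  have : (fun k => ‖bohrSeq a w (k+1)‖) = fun k => ((1 - a^2) * ‖w‖) * (a * ‖w‖)^k := by
    funext k; exact norm_bohrSeq_succ a ha0.le ha1.le w k
  rw [this]
  exact (summable_geometric_of_lt_one haw0 haw).mul_left _

lemma moebius_norm_lt (a : ℝ) (ha0 : 0 < a) (ha1 : a < 1) (w : ℂ) (hw : ‖w‖ < 1) :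
    ‖((a : ℂ) - w) / (1 - (a : ℂ) * w)‖ < 1 := by
  have hw2 : w.re^2 + w.im^2 < 1 := by
    have h1 : ‖w‖^2 < 1 := by nlinarith [norm_nonneg w]
    have h2 : ‖w‖^2 = w.re^2 + w.im^2 := by
      rw [Complex.sq_norm, Complex.normSq_apply]; ring
    linarith [h2 ▸ h1]
  have key : ‖(a:ℂ) - w‖^2 < ‖1 - (a:ℂ)*w‖^2 := by
    have e1 : ‖(a:ℂ) - w‖^2 = (a - w.re)^2 + w.im^2 := by
      rw [Complex.sq_norm, Complex.normSq_apply]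
      simp [Complex.sub_re, Complex.sub_im, Complex.ofReal_re, Complex.ofReal_im]
      ring
    have e2 : ‖1 - (a:ℂ)*w‖^2 = (1 - a*w.re)^2 + (a*w.im)^2 := by
      rw [Complex.sq_norm, Complex.normSq_apply]
      simp [Complex.sub_re, Complex.sub_im, Complex.mul_re, Complex.mul_im]
      ring
    rw [e1, e2]
    nlinarith [mul_pos (show (0:ℝ) < 1 - a^2 by nlinarith) (show (0:ℝ) < 1 - (w.re^2 + w.im^2) by linarith)]
  have hlt : ‖(a:ℂ) - w‖ < ‖1 - (a:ℂ)*w‖ :=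
    lt_of_pow_lt_pow_left₀ 2 (norm_nonneg _) key
  have hpos : 0 < ‖1 - (a:ℂ)*w‖ := lt_of_le_of_lt (norm_nonneg _) hlt
  rw [norm_div, div_lt_one hpos]
  exact hlt

lemma exists_functional (n : ℕ) (Q : Set (Fin n → ℂ))
    (hQopen : IsOpen Q) (hQ0 : (0 : Fin n → ℂ) ∈ Q)
    (hQcirc : ∀ z ∈ Q, ∀ t : ℂ, ‖t‖ ≤ 1 → t • z ∈ Q)
    (hQconv : Convex ℝ Q) (hQne : Q ≠ Set.univ) :
    ∃ ℓ : (Fin n → ℂ) →L[ℂ] ℂ, ∃ c : ℝ, 0 < c ∧ (∀ z ∈ Q, ‖ℓ z‖ < c) ∧ ∃ v ∈ Q, ℓ v ≠ 0 := by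
  obtain ⟨p, hp⟩ := (Set.ne_univ_iff_exists_notMem Q).mp hQne
  obtain ⟨f, hf⟩ := geometric_hahn_banach_open_point hQconv hQopen hp
  set c : ℝ := f p with hcdef
  have hc : 0 < c := by
    have := hf 0 hQ0
    simpa using this
  set ℓ : (Fin n → ℂ) →L[ℂ] ℂ := f.extendTo𝕜' with hldef
  have hre : ∀ x, (ℓ x).re = f x := by
    intro x
    rw [hldef]
    exact StrongDual.re_extendRCLike_apply (𝕜 := ℂ) f x
  have hnorm : ∀ z ∈ Q, ‖ℓ z‖ < c := by
    intro z hz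
    rcases eq_or_ne (ℓ z) 0 with h | h
    · simpa [h] using hc
    · have hz0 : (‖ℓ z‖ : ℂ) ≠ 0 := by
        simpa using norm_ne_zero_iff.mpr h
      set u : ℂ := (starRingEnd ℂ) (ℓ z) / ‖ℓ z‖ with hu
      have hun : ‖u‖ = 1 := by
        rw [hu, norm_div]
        rw [RCLike.norm_conj, Complex.norm_real, Real.norm_of_nonneg (norm_nonneg _)]
        exact div_self (norm_ne_zero_iff.mpr h)
      have hmem : u • z ∈ Q := hQcirc z hz u hun.le
      have hval : ℓ (u • z) = ((‖ℓ z‖ : ℝ) : ℂ) := by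
        rw [map_smul, smul_eq_mul, hu, div_mul_eq_mul_div]
        rw [show (starRingEnd ℂ) (ℓ z) * ℓ z = (((‖ℓ z‖^2 : ℝ)) : ℂ) by
          rw [mul_comm, Complex.mul_conj]
          norm_cast
          rw [Complex.normSq_eq_norm_sq]]
        push_cast
        rw [sq, mul_div_assoc, div_self hz0, mul_one]
      have : ‖ℓ z‖ = f (u • z) := by
        rw [← hre]
        rw [hval, Complex.ofReal_re]
      rw [this]
      exact hf _ hmem
  have hcont : Filter.Tendsto (fun ε : ℝ => ε • p) (nhds 0) (nhds (0 : Fin n → ℂ)) := by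
    have h : Continuous (fun ε : ℝ => ε • p) := continuous_id.smul continuous_const
    simpa using h.tendsto 0
  have hev : ∀ᶠ ε : ℝ in nhds 0, ε • p ∈ Q := hcont.eventually_mem (hQopen.mem_nhds hQ0)
  obtain ⟨ε, hεQ, hε⟩ :=
    ((hev.filter_mono (nhdsWithin_le_nhds (s := Set.Ioi (0:ℝ)))).and
      eventually_mem_nhdsWithin).exists
  refine ⟨ℓ, c, hc, hnorm, ε • p, hεQ, ?_⟩
  intro h0
  have : (ℓ (ε • p)).re = ε * c := by
    rw [hre, map_smul, smul_eq_mul]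
  rw [h0] at this
  simp at this
  rcases this with h | h
  · exact absurd h (ne_of_gt hε)
  · exact absurd h (ne_of_gt hc)

/-- Theorem 8, sharpness: for a convex complete circular domain `Q ≠ ℂⁿ`, the
constant `1/3` is best possible. -/
theorem bohr_homogeneous_sharp (n : ℕ) (Q : Set (Fin n → ℂ))
    (hQopen : IsOpen Q) (hQ0 : (0 : Fin n → ℂ) ∈ Q)
    (hQcirc : ∀ z ∈ Q, ∀ t : ℂ, ‖t‖ ≤ 1 → t • z ∈ Q)
    (hQconv : Convex ℝ Q) (hQne : Q ≠ Set.univ) :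
    ∀ r : ℝ, 1 / 3 < r → r < 1 →
      ∃ P : ℕ → MvPolynomial (Fin n) ℂ,
        (∀ k, (P k).IsHomogeneous k) ∧
        (∀ z ∈ Q, Summable (fun k => MvPolynomial.eval z (P k))) ∧
        (∀ z ∈ Q, ‖∑' k, MvPolynomial.eval z (P k)‖ < 1) ∧
        ∃ z₀ ∈ (fun w : Fin n → ℂ => r • w) '' Q,
          1 ≤ ∑' k, (‖MvPolynomial.eval z₀ (P k)‖₊ : ENNReal) := by
  intro r hr13 hr1
  have hr0 : 0 < r := lt_trans (by norm_num) hr13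
  obtain ⟨ℓ, c, hc, hlc, v, hvQ, hv⟩ :=
    exists_functional n Q hQopen hQ0 hQcirc hQconv hQne
  -- the sup of ‖ℓ z‖ on Q
  set S : Set ℝ := (fun z => ‖ℓ z‖) '' Q with hSdef
  have hSne : S.Nonempty := ⟨‖ℓ v‖, v, hvQ, rfl⟩
  have hSbdd : BddAbove S := ⟨c, by rintro x ⟨z, hz, rfl⟩; exact (hlc z hz).le⟩
  set s : ℝ := sSup S with hsdef
  have hsle : ∀ z ∈ Q, ‖ℓ z‖ ≤ s := fun z hz => le_csSup hSbdd ⟨z, hz, rfl⟩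
  have hspos : 0 < s := lt_of_lt_of_le (norm_pos_iff.mpr hv) (hsle v hvQ)
  have hslt : ∀ z ∈ Q, ‖ℓ z‖ < s := by
    intro z hz
    rcases eq_or_ne (ℓ z) 0 with h | h
    · rw [h]; simpa using hspos
    · -- find ε > 0 with (1+ε) • z ∈ Q
      have hcont : Filter.Tendsto (fun ε : ℝ => (1+ε) • z) (nhds 0) (nhds z) := by
        have hcc : Continuous (fun ε : ℝ => (1+ε) • z) :=
          (continuous_const.add continuous_id).smul continuous_const
        have := hcc.tendsto 0
        simpa using this
      have hev : ∀ᶠ ε : ℝ in nhds 0, (1+ε) • z ∈ Q :=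
        hcont.eventually_mem (hQopen.mem_nhds hz)
      obtain ⟨ε, hεQ, hε⟩ :=
        ((hev.filter_mono (nhdsWithin_le_nhds (s := Set.Ioi (0:ℝ)))).and
          eventually_mem_nhdsWithin).exists
      have hεQ' : ‖ℓ ((1+ε) • z)‖ ≤ s := hsle _ hεQ
      rw [ContinuousLinearMap.map_smul_of_tower, norm_smul, Real.norm_of_nonneg
        (by linarith [Set.mem_Ioi.mp hε] : (0:ℝ) ≤ 1 + ε)] at hεQ'
      have hε0 : (0:ℝ) < ε := hε
      have hnz : 0 < ‖ℓ z‖ := norm_pos_iff.mpr h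
      nlinarith
  -- choose a
  set a : ℝ := ((1 - r)/(2*r) + 1)/2 with hadef
  have ha0 : 0 < a := by
    have : 0 < (1-r)/(2*r) := div_pos (by linarith) (by linarith)
    rw [hadef]; linarith
  have ha1 : a < 1 := by
    have h1 : (1-r)/(2*r) < 1 := (div_lt_one (by linarith)).mpr (by linarith)
    rw [hadef]; linarith
  have hkey : 1 < r * (1 + 2*a) := by
    have heq : r * (1 + 2*a) = 2*r + (1-r)/2 := by
      rw [hadef]; field_simp; ring
    rw [heq]; linarith
  set u : ℝ := 1 / (r * (1 + 2*a)) with hudef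
  have hu1 : u < 1 := by
    rw [hudef]
    rw [div_lt_one (by linarith)]
    exact hkey
  -- choose z₁
  obtain ⟨x, ⟨z₁, hz₁Q, rfl⟩, hx⟩ :=
    exists_lt_of_lt_csSup hSne (show u * s < sSup S by
      rw [← hsdef]; nlinarith)
  -- the point z₀
  set z₀ : Fin n → ℂ := r • z₁ with hz₀def
  have hz₀Q : z₀ ∈ Q := by
    have : ((r:ℂ)) • z₁ ∈ Q := by
      apply hQcirc z₁ hz₁Q
      rw [Complex.norm_real, Real.norm_of_nonneg hr0.le]
      exact hr1.le
    simpa [hz₀def, Complex.real_smul] using this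
  -- the linear polynomial
  set Lp : MvPolynomial (Fin n) ℂ :=
    ∑ i : Fin n, MvPolynomial.C (ℓ (fun j => if i = j then 1 else 0) / (s:ℂ)) * MvPolynomial.X i with hLpdef
  have hLeval : ∀ z, MvPolynomial.eval z Lp = ℓ z / (s:ℂ) := by
    intro z
    rw [hLpdef]
    rw [map_sum]
    have hz : ℓ z = ∑ i, z i • (ℓ (fun j => if i = j then 1 else 0)) :=
      LinearMap.pi_apply_eq_sum_univ (ℓ : (Fin n → ℂ) →ₗ[ℂ] ℂ) z
    rw [hz, Finset.sum_div]
    apply Finset.sum_congr rfl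
    intro i _
    rw [MvPolynomial.eval_mul, MvPolynomial.eval_C, MvPolynomial.eval_X, smul_eq_mul]
    ring
  have hLhom : Lp.IsHomogeneous 1 :=
    MvPolynomial.IsHomogeneous.sum _ _ _
      (fun i _ => MvPolynomial.isHomogeneous_C_mul_X _ _)
  -- the polynomials
  set P : ℕ → MvPolynomial (Fin n) ℂ := fun k =>
    match k with
    | 0 => MvPolynomial.C ((a:ℝ):ℂ)
    | (k+1) => MvPolynomial.C (-(1 - (a:ℂ)^2) * (a:ℂ)^k) * Lp^(k+1) with hPdef
  have hPeval : ∀ (z : Fin n → ℂ) k, MvPolynomial.eval z (P k) = bohrSeq a (ℓ z / (s:ℂ)) k := by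
    intro z k
    match k with
    | 0 => simp [hPdef, bohrSeq]
    | (k+1) =>
      show MvPolynomial.eval z (MvPolynomial.C (-(1 - (a:ℂ)^2) * (a:ℂ)^k) * Lp^(k+1)) = _
      rw [MvPolynomial.eval_mul, MvPolynomial.eval_C, MvPolynomial.eval_pow, hLeval]
      rfl
  have hPhom : ∀ k, (P k).IsHomogeneous k := by
    intro k
    match k with
    | 0 => exact MvPolynomial.isHomogeneous_C _ _
    | (k+1) =>
      have h := (hLhom.pow (k+1)).C_mul (-(1 - (a:ℂ)^2) * (a:ℂ)^k)
      rw [one_mul] at h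
      exact h
  -- norms of w on Q
  have hwlt : ∀ z ∈ Q, ‖ℓ z / (s:ℂ)‖ < 1 := by
    intro z hz
    rw [norm_div, Complex.norm_real, Real.norm_of_nonneg hspos.le, div_lt_one hspos]
    exact hslt z hz
  have hawlt : ∀ z ∈ Q, ‖(a:ℂ) * (ℓ z / (s:ℂ))‖ < 1 := by
    intro z hz
    rw [norm_mul]
    have h2 : ‖(a:ℂ)‖ = a := by simp [abs_of_nonneg ha0.le]
    rw [h2]
    nlinarith [hwlt z hz, norm_nonneg (ℓ z / (s:ℂ))]
  refine ⟨P, hPhom, ?_, ?_, z₀, ⟨z₁, hz₁Q, rfl⟩, ?_⟩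
  · intro z hz
    have : (fun k => MvPolynomial.eval z (P k)) = bohrSeq a (ℓ z / (s:ℂ)) := by
      funext k; exact hPeval z k
    rw [this]
    exact summable_bohrSeq a _ (hawlt z hz)
  · intro z hz
    have : (fun k => MvPolynomial.eval z (P k)) = bohrSeq a (ℓ z / (s:ℂ)) := by
      funext k; exact hPeval z k
    rw [this, tsum_bohrSeq a _ (hawlt z hz)]
    exact moebius_norm_lt a ha0 ha1 _ (hwlt z hz)
  · -- at z₀ = r • z₁, with w₀ = ℓ z₀ / s
    set w₀ : ℂ := ℓ z₀ / (s:ℂ) with hw₀def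
    have hweq : (fun k => MvPolynomial.eval z₀ (P k)) = bohrSeq a w₀ := by
      funext k; exact hPeval z₀ k
    have ht : ‖w₀‖ = r * ‖ℓ z₁‖ / s := by
      rw [hw₀def, norm_div, Complex.norm_real, Real.norm_of_nonneg hspos.le, hz₀def,
        ContinuousLinearMap.map_smul_of_tower, norm_smul, Real.norm_of_nonneg hr0.le]
    have hw₀1 : ‖w₀‖ < 1 := hwlt z₀ hz₀Q
    have htlb : 1 < ‖w₀‖ * (1 + 2*a) := by
      have h2 : 0 < r * (1+2*a) := by nlinarith
      have h1 : 1 / (r * (1 + 2*a)) * s < ‖ℓ z₁‖ := by rw [← hudef]; exact hx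
      rw [div_mul_eq_mul_div, one_mul, div_lt_iff₀ h2] at h1
      rw [ht, div_mul_eq_mul_div, lt_div_iff₀ hspos, one_mul]
      nlinarith
    simp only [hPeval z₀, ← hw₀def]
    have hsumn : Summable (fun k => ‖bohrSeq a w₀ k‖) := summable_norm_bohrSeq a ha0 ha1 w₀ hw₀1
    have hsumnn : Summable (fun k => ‖bohrSeq a w₀ k‖₊) := by
      rw [← NNReal.summable_coe]
      simpa [coe_nnnorm] using hsumn
    rw [← ENNReal.coe_tsum hsumnn, ENNReal.one_le_coe_iff, ← NNReal.one_le_coe,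
      NNReal.coe_tsum]
    have hcoe : (fun k => (‖bohrSeq a w₀ k‖₊ : ℝ)) = fun k => ‖bohrSeq a w₀ k‖ := by
      funext k; exact coe_nnnorm _
    rw [hcoe, tsum_norm_bohrSeq a ha0 ha1 w₀ hw₀1]
    have hden : 0 < 1 - a * ‖w₀‖ := by nlinarith [norm_nonneg w₀]
    have hstep : (1-a) * (1 - a*‖w₀‖) ≤ (1-a^2)*‖w₀‖ := by
      nlinarith [mul_nonneg (show (0:ℝ) ≤ 1-a by linarith)
        (show (0:ℝ) ≤ ‖w₀‖*(1+2*a) - 1 by linarith)]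
    have hfin := (le_div_iff₀ hden).mpr hstep
    have : (1-a^2)*‖w₀‖/(1 - a*‖w₀‖) = (1-a^2)/(1 - a*‖w₀‖)*‖w₀‖ := by ring
    linarith
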